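/- Let V be a vector space over a field K and let 𝓕 ⊆ V. Then HL(𝓕) is a successor cardinal: there exists a cardinal μ with HL(𝓕) = Order.succ μ. -/

import Mathlib

open Cardinal

/-- The lineability number of `𝓕 ⊆ V`: the least cardinal `l` such that `𝓕 ∪ {0}` contains
no `K`-linear subspace of dimension `l`. -/
noncomputable def lineabilityNumber (K V : Type u) [Field K] [AddCommGroup V] [Module K V]
    (𝓕 : Set V) : Cardinal.{u} :=
  sInf {l : Cardinal.{u} |
    ¬ ∃ W : Submodule K V, (W : Set V) ⊆ 𝓕 ∪ {0} ∧ Module.rank K W = l}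

/-- The homogeneous lineability number of `𝓕 ⊆ V`: the least cardinal `l` for which some
subspace `Y ⊆ 𝓕 ∪ {0}` of dimension `< l` cannot be extended to a subspace `X ⊆ 𝓕 ∪ {0}`
of dimension `l`. -/
noncomputable def homLineabilityNumber (K V : Type u) [Field K] [AddCommGroup V] [Module K V]
    (𝓕 : Set V) : Cardinal.{u} :=
  sInf {l : Cardinal.{u} |
    ∃ Y : Submodule K V, (Y : Set V) ⊆ 𝓕 ∪ {0} ∧ Module.rank K Y < l ∧
      ¬ ∃ X : Submodule K V, Y ≤ X ∧ (X : Set V) ⊆ 𝓕 ∪ {0} ∧ Module.rank K X = l}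

/-- Given `Y ≤ M` with `rank Y ≤ l ≤ rank M` (and `l` infinite), there is an intermediate
submodule of rank exactly `l`. -/
private lemma exists_sandwich_rank {K V : Type u} [Field K] [AddCommGroup V] [Module K V]
    {Y M : Submodule K V} (hYM : Y ≤ M) {l : Cardinal.{u}} (hl : ℵ₀ ≤ l)
    (hY : Module.rank K Y ≤ l) (hM : l ≤ Module.rank K M) :
    ∃ Z : Submodule K V, Y ≤ Z ∧ Z ≤ M ∧ Module.rank K Z = l := by
  classical
  let b := Module.Basis.ofVectorSpace K M
  have hb : #(Module.Basis.ofVectorSpaceIndex K M) = Module.rank K M := b.mk_eq_rank''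
  rw [← hb] at hM
  obtain ⟨s, hs⟩ := Cardinal.le_mk_iff_exists_set.mp hM
  have hind : LinearIndependent K (fun i : s => b i) :=
    b.linearIndependent.comp _ Subtype.val_injective
  set Z₀ : Submodule K M := Submodule.span K (Set.range fun i : s => b i) with hZ₀def
  have hZ₀ : Module.rank K Z₀ = l := by
    rw [hZ₀def, rank_span hind, Cardinal.mk_range_eq _ hind.injective, hs]
  set Y' : Submodule K M := Y.comap M.subtype with hY'def
  have hY' : Module.rank K Y' = Module.rank K Y :=
    (Submodule.comapSubtypeEquivOfLe hYM).rank_eq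
  set Z' : Submodule K M := Y' ⊔ Z₀ with hZ'def
  have hZ'le : Module.rank K Z' ≤ l := by
    calc Module.rank K Z' ≤ Module.rank K Y' + Module.rank K Z₀ :=
          Submodule.rank_add_le_rank_add_rank _ _
      _ = Module.rank K Y + l := by rw [hY', hZ₀]
      _ = l := Cardinal.add_eq_right hl hY
  have hZ' : Module.rank K Z' = l :=
    le_antisymm hZ'le (hZ₀ ▸ Submodule.rank_mono le_sup_right)
  refine ⟨Z'.map M.subtype, ?_, Submodule.map_subtype_le _ _, ?_⟩
  · have hYeq : Y = Y'.map M.subtype := by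
      rw [hY'def, Submodule.map_comap_subtype, inf_eq_right.mpr hYM]
    rw [hYeq]
    exact Submodule.map_mono le_sup_left
  · rw [← (Submodule.equivMapOfInjective M.subtype M.injective_subtype Z').rank_eq]
    exact hZ'

/-- **Proposition (iv).** The homogeneous lineability number is always a successor
cardinal. -/
theorem homLineabilityNumber_isSucc {K V : Type u} [Field K]
    [AddCommGroup V] [Module K V] (𝓕 : Set V) :
    ∃ μ : Cardinal.{u}, homLineabilityNumber K V 𝓕 = Order.succ μ := by
  classical
  set S : Set Cardinal.{u} := {l : Cardinal.{u} |
    ∃ Y : Submodule K V, (Y : Set V) ⊆ 𝓕 ∪ {0} ∧ Module.rank K Y < l ∧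
      ¬ ∃ X : Submodule K V, Y ≤ X ∧ (X : Set V) ⊆ 𝓕 ∪ {0} ∧ Module.rank K X = l} with hS
  have hself : homLineabilityNumber K V 𝓕 = sInf S := rfl
  have hne : S.Nonempty := by
    refine ⟨Order.succ (Module.rank K V), ⊥, ?_, ?_, ?_⟩
    · rw [Submodule.bot_coe]
      exact Set.singleton_subset_iff.mpr (Set.mem_union_right _ rfl)
    · rw [rank_bot]
      exact lt_of_le_of_lt zero_le (Order.lt_succ _)
    · rintro ⟨X, -, -, hX⟩
      exact absurd hX (ne_of_lt ((Submodule.rank_le X).trans_lt (Order.lt_succ _)))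
  set l : Cardinal.{u} := sInf S with hldef
  rw [hself]
  obtain ⟨Y, hY𝓕, hYlt, hYne⟩ : l ∈ S := csInf_mem hne
  by_contra hcon
  push_neg at hcon
  have hlt : ∀ c : Cardinal.{u}, c < l → Order.succ c < l := fun c hc =>
    lt_of_le_of_ne (Order.succ_le_of_lt hc) fun h => hcon c h.symm
  have hinf : ℵ₀ ≤ l := by
    by_contra h
    push_neg at h
    obtain ⟨n, hn⟩ := Cardinal.lt_aleph0.mp h
    cases n with
    | zero =>
        rw [hn] at hYlt
        simp at hYlt
    | succ m => exact hcon m (hn.trans (Cardinal.nat_succ m))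
  have hmin : ∀ c : Cardinal.{u}, c < l → c ∉ S := fun c hc hcS =>
    absurd hc (not_lt.mpr (csInf_le' hcS))
  set P : Set (Submodule K V) := {X : Submodule K V |
    Y ≤ X ∧ (X : Set V) ⊆ 𝓕 ∪ {0} ∧ Module.rank K X < l} with hP
  have hzorn : ∀ c ⊆ P, IsChain (· ≤ ·) c → ∀ y ∈ c, ∃ ub ∈ P, ∀ z ∈ c, z ≤ ub := by
    intro c hcP hchain y hyc
    have hdir := hchain.directedOn
    have hsub : ((sSup c : Submodule K V) : Set V) ⊆ 𝓕 ∪ {0} := by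
      intro x hx
      obtain ⟨W, hWc, hxW⟩ := (Submodule.mem_sSup_of_directed ⟨y, hyc⟩ hdir).1 hx
      exact (hcP hWc).2.1 hxW
    have hYM : Y ≤ sSup c := le_trans (hcP hyc).1 (le_sSup hyc)
    by_cases hrank : Module.rank K (sSup c : Submodule K V) < l
    · exact ⟨sSup c, ⟨hYM, hsub, hrank⟩, fun z hz => le_sSup hz⟩
    · push_neg at hrank
      obtain ⟨Z, hYZ, hZM, hZ⟩ := exists_sandwich_rank hYM hinf hYlt.le hrank
      exact absurd ⟨Z, hYZ, Set.Subset.trans (SetLike.coe_subset_coe.mpr hZM) hsub, hZ⟩ hYne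
  obtain ⟨M, hYM, hMmax⟩ :=
    zorn_le_nonempty₀ P hzorn Y ⟨le_rfl, hY𝓕, hYlt⟩
  obtain ⟨-, hM𝓕, hMrank⟩ := hMmax.prop
  have hsucc : Order.succ (Module.rank K M) < l := hlt _ hMrank
  have hnotS := hmin _ hsucc
  simp only [hS, Set.mem_setOf_eq] at hnotS
  push_neg at hnotS
  obtain ⟨X, hMX, hX𝓕, hXrank⟩ := hnotS M hM𝓕 (Order.lt_succ _)
  have hXP : X ∈ P := ⟨hYM.trans hMX, hX𝓕, hXrank ▸ hsucc⟩
  have hXM : X = M := le_antisymm (hMmax.2 hXP hMX) hMX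
  rw [hXM] at hXrank
  exact absurd hXrank (Order.lt_succ _).ne
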